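/- If φ > 0 satisfies 2(a+b)φ = √(j² + 4λaφ) + √(j² + 4bφμ) with a,b,λ,μ > 0, then −√(j² + 4λaφ) + λ + aφ − √(j² + 4μbφ) + μ + bφ = −√(j² + 4abλμ/(a+b)²) + bλ/(a+b) + aμ/(a+b). -/
import Mathlib


theorem sqrt_terms_critical (a b lam mu φ j : ℝ)
    (ha : 0 < a) (hb : 0 < b) (hlam : 0 < lam) (hmu : 0 < mu) (hφ : 0 < φ)
    (hcrit : 2 * (a + b) * φ
      = Real.sqrt (j^2 + 4 * lam * a * φ) + Real.sqrt (j^2 + 4 * b * φ * mu)) :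
    -Real.sqrt (j^2 + 4 * lam * a * φ) + lam + a * φ
      - Real.sqrt (j^2 + 4 * mu * b * φ) + mu + b * φ
    = -Real.sqrt (j^2 + 4 * a * b * lam * mu / (a + b)^2)
        + b * lam / (a + b) + a * mu / (a + b) := by
  have hrw : j^2 + 4 * mu * b * φ = j^2 + 4 * b * φ * mu := by ring
  rw [hrw]
  set u := Real.sqrt (j^2 + 4 * lam * a * φ) with hu_def
  set v := Real.sqrt (j^2 + 4 * b * φ * mu) with hv_def
  have hab : 0 < a + b := by linarith
  have hu0 : 0 ≤ u := Real.sqrt_nonneg _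
  have hv0 : 0 ≤ v := Real.sqrt_nonneg _
  have hu2 : u^2 = j^2 + 4 * lam * a * φ := Real.sq_sqrt (by positivity)
  have hv2 : v^2 = j^2 + 4 * b * φ * mu := Real.sq_sqrt (by positivity)
  have hT0 : a * lam + b * mu ≤ (a + b)^2 * φ := by
    nlinarith [mul_nonneg hu0 hv0, sq_nonneg j]
  have huv : u - v = 2 * (a * lam - b * mu) / (a + b) := by
    have h1 : (u - v) * (2 * (a + b) * φ) = u^2 - v^2 := by
      rw [hcrit]; ring
    rw [hu2, hv2] at h1
    field_simp
    nlinarith [h1]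
  have hu_val : u = (a + b) * φ + (a * lam - b * mu) / (a + b) := by
    have h2 : u + v = 2 * (a + b) * φ := hcrit.symm
    have : 2 * u = 2 * ((a + b) * φ) + 2 * ((a * lam - b * mu) / (a + b)) := by
      have := huv
      field_simp at this ⊢
      nlinarith [this, h2]
    linarith
  have hj2 : j^2 = u^2 - 4 * lam * a * φ := by linarith [hu2]
  have hT2 : j^2 + 4 * a * b * lam * mu / (a + b)^2
      = ((a + b) * φ - (a * lam + b * mu) / (a + b))^2 := by
    rw [hj2, hu_val]
    field_simp
    ring
  have hTnn : 0 ≤ (a + b) * φ - (a * lam + b * mu) / (a + b) := by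
    rw [sub_nonneg, div_le_iff₀ hab]
    nlinarith [hT0]
  rw [hT2, Real.sqrt_sq hTnn]
  field_simp
  linear_combination (a + b) * hcrit
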